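/- Let p ≥ 7 be a prime such that every nonzero residue class modulo any irreducible F ∈ F_p[X] of degree r ≥ 2 has a non-constant square-free (r-1)-smooth representative. Define a sequence of monic irreducible polynomials in F_p[X] starting with X, where at each step, if N is the product of terms so far, the next term is the minimal (in the order induced by I(f) = Σ a_k p^k) monic irreducible g not dividing N such that g divides h + 1 for some divisor h of N. Then this sequence produces all monic irreducible polynomials of F_p[X] in increasing order. -/

import Mathlib

open Polynomial Finset

/-- The value `I(f) = Σ a_k p^k` of a polynomial over `ZMod p`, inducing a total order. -/
def Ival (p : ℕ) (f : Polynomial (ZMod p)) : ℕ :=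
  ∑ k ∈ Finset.range (f.natDegree + 1), (f.coeff k).val * p ^ k


open Polynomial Finset

section Aux
variable {p : ℕ} [Fact p.Prime]

private lemma hp1' : 1 < p := (Fact.out : p.Prime).one_lt

lemma sum_digits_lt (d : ℕ) (a : ℕ → ℕ) (ha : ∀ k, a k < p) :
    ∑ k ∈ range d, a k * p ^ k < p ^ d := by
  induction d with
  | zero => simp
  | succ d ih =>
    rw [Finset.sum_range_succ, pow_succ]
    have h2 : a d + 1 ≤ p := ha d
    calc ∑ k ∈ range d, a k * p ^ k + a d * p ^ d
        < p ^ d + a d * p ^ d := Nat.add_lt_add_right ih _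
      _ = (a d + 1) * p ^ d := by ring
      _ ≤ p * p ^ d := Nat.mul_le_mul_right _ h2
      _ = p ^ d * p := mul_comm _ _

lemma digits_unique (d : ℕ) (a b : ℕ → ℕ) (ha : ∀ k, a k < p) (hb : ∀ k, b k < p)
    (h : ∑ k ∈ range d, a k * p ^ k = ∑ k ∈ range d, b k * p ^ k) :
    ∀ k < d, a k = b k := by
  induction d generalizing a b with
  | zero => intro k hk; omega
  | succ d ih =>
    rw [Finset.sum_range_succ', Finset.sum_range_succ'] at h
    have hps : 0 < p := lt_trans Nat.zero_lt_one hp1'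
    have key : ∀ c : ℕ → ℕ, (∑ k ∈ range d, c (k + 1) * p ^ (k + 1)) + c 0 * p ^ 0
        = (∑ k ∈ range d, c (k + 1) * p ^ k) * p + c 0 := by
      intro c
      rw [Finset.sum_mul]
      simp [pow_succ, mul_assoc]
    rw [key a, key b] at h
    have ha0 : a 0 < p := ha 0
    have hb0 : b 0 < p := hb 0
    have hmod : a 0 = b 0 := by
      have := congrArg (· % p) h
      simpa [Nat.mul_add_mod, Nat.add_mul_mod_self_left, Nat.mod_eq_of_lt ha0,
        Nat.mod_eq_of_lt hb0, Nat.add_comm] using this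
    have hdiv : ∑ k ∈ range d, a (k + 1) * p ^ k = ∑ k ∈ range d, b (k + 1) * p ^ k := by
      have e : ∀ A c : ℕ, c < p → (A * p + c) / p = A := by
        intro A c hc
        rw [mul_comm, Nat.mul_add_div hps, Nat.div_eq_of_lt hc, Nat.add_zero]
      have := congrArg (· / p) h
      simpa [e _ _ ha0, e _ _ hb0] using this
    intro k hk
    cases k with
    | zero => exact hmod
    | succ k => exact ih (fun k => a (k + 1)) (fun k => b (k + 1)) (fun k => ha _) (fun k => hb _) hdiv k (by omega)


end Aux

section Ival
variable {p : ℕ} [Fact p.Prime]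

instance : NeZero p := ⟨(Fact.out : p.Prime).ne_zero⟩

lemma Ival_eq_padded (f : Polynomial (ZMod p)) (d : ℕ) (hd : f.natDegree ≤ d) :
    Ival p f = ∑ k ∈ range (d + 1), (f.coeff k).val * p ^ k := by
  apply Finset.sum_subset
  · exact Finset.range_mono (by omega : f.natDegree + 1 ≤ d + 1)
  · intro k hk hk2
    simp only [Finset.mem_range, not_lt] at hk2
    have : f.natDegree < k := by omega
    simp [coeff_eq_zero_of_natDegree_lt this]

lemma Ival_lt (f : Polynomial (ZMod p)) : Ival p f < p ^ (f.natDegree + 1) :=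
  sum_digits_lt _ _ (fun k => ZMod.val_lt _)

lemma le_Ival (f : Polynomial (ZMod p)) (hf : f.Monic) : p ^ f.natDegree ≤ Ival p f := by
  have h1 : (f.coeff f.natDegree).val * p ^ f.natDegree = p ^ f.natDegree := by
    rw [hf.coeff_natDegree, ZMod.val_one_eq_one_mod, Nat.mod_eq_of_lt hp1', one_mul]
  calc p ^ f.natDegree = (f.coeff f.natDegree).val * p ^ f.natDegree := h1.symm
    _ ≤ Ival p f := Finset.single_le_sum (f := fun k => (f.coeff k).val * p ^ k)
        (fun i _ => Nat.zero_le _) (Finset.self_mem_range_succ _)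

lemma Ival_lt_of_deg {f g : Polynomial (ZMod p)} (hg : g.Monic)
    (h : f.natDegree < g.natDegree) : Ival p f < Ival p g :=
  lt_of_lt_of_le (lt_of_lt_of_le (Ival_lt f)
    (Nat.pow_le_pow_right (le_of_lt hp1') h)) (le_Ival g hg)

lemma Ival_inj {f g : Polynomial (ZMod p)} (hf : f.Monic) (hg : g.Monic)
    (h : Ival p f = Ival p g) : f = g := by
  have hdeg : f.natDegree = g.natDegree := by
    rcases lt_trichotomy f.natDegree g.natDegree with hlt | he | hlt
    · exact absurd h (Nat.ne_of_lt (Ival_lt_of_deg hg hlt))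
    · exact he
    · exact absurd h.symm (Nat.ne_of_lt (Ival_lt_of_deg hf hlt))
  set d := g.natDegree with hd
  rw [Ival_eq_padded f d hdeg.le, Ival_eq_padded g d le_rfl] at h
  have := digits_unique (d + 1) (fun k => (f.coeff k).val) (fun k => (g.coeff k).val)
    (fun k => ZMod.val_lt _) (fun k => ZMod.val_lt _) h
  ext k
  by_cases hk : k < d + 1
  · exact ZMod.val_injective p (this k hk)
  · rw [coeff_eq_zero_of_natDegree_lt (by omega : f.natDegree < k),
      coeff_eq_zero_of_natDegree_lt (by omega : g.natDegree < k)]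

lemma Ival_X : Ival p X = p := by
  have h1 : (X : Polynomial (ZMod p)).natDegree = 1 := natDegree_X
  rw [Ival, h1]
  simp [Finset.sum_range_succ, ZMod.val_one_eq_one_mod, Nat.mod_eq_of_lt hp1']

lemma Ival_X_add_C (c : ZMod p) : Ival p (X + C c) = c.val + p := by
  have h1 : (X + C c).natDegree = 1 := natDegree_X_add_C c
  rw [Ival, h1]
  simp [Finset.sum_range_succ, coeff_X_zero, coeff_X_one,
    ZMod.val_one_eq_one_mod, Nat.mod_eq_of_lt hp1']

lemma squarefree_dvd {f N : Polynomial (ZMod p)} (hf : Squarefree f) (hN : N ≠ 0)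
    (H : ∀ q : Polynomial (ZMod p), q.Monic → Irreducible q → q ∣ f → q ∣ N) : f ∣ N := by
  classical
  have hf0 : f ≠ 0 := hf.ne_zero
  rw [UniqueFactorizationMonoid.dvd_iff_normalizedFactors_le_normalizedFactors hf0 hN]
  rw [Multiset.le_iff_subset
    ((UniqueFactorizationMonoid.squarefree_iff_nodup_normalizedFactors hf0).1 hf)]
  intro q hq
  have hq1 := UniqueFactorizationMonoid.prime_of_normalized_factor q hq
  have hqn := UniqueFactorizationMonoid.normalize_normalized_factor q hq
  have hqm : q.Monic := hqn ▸ Polynomial.monic_normalize hq1.ne_zero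
  have hqN : q ∣ N := H q hqm hq1.irreducible
    (UniqueFactorizationMonoid.dvd_of_mem_normalizedFactors hq)
  obtain ⟨r, hr, hassoc⟩ := UniqueFactorizationMonoid.exists_mem_normalizedFactors_of_dvd
    hN hq1.irreducible hqN
  rwa [hassoc.eq_of_normalized hqn
    (UniqueFactorizationMonoid.normalize_normalized_factor r hr)]

end Ival

/-- Let `p ≥ 7` be a prime such that every nonzero residue class modulo any irreducible
`F ∈ F_p[X]` of degree `r ≥ 2` has a non-constant square-free `(r-1)`-smooth representative.
Consider a sequence of monic irreducible polynomials starting with `X`, where at each step,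
if `N` is the product of terms so far, the next term is the `I`-minimal monic irreducible `g`
not dividing `N` with `g ∣ h + 1` for some `h ∣ N`. Then the sequence produces all monic
irreducible polynomials of `F_p[X]` in increasing order. -/
theorem stmt_15 (p : ℕ) [Fact p.Prime] (hp : 7 ≤ p)
    (hrep : ∀ F : Polynomial (ZMod p), Irreducible F → 2 ≤ F.natDegree →
      ∀ a : Polynomial (ZMod p), ¬ F ∣ a →
        ∃ f : Polynomial (ZMod p), Squarefree f ∧ 1 ≤ f.natDegree ∧
          (∀ g : Polynomial (ZMod p), Irreducible g → g ∣ f →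
            g.natDegree ≤ F.natDegree - 1) ∧ F ∣ f - a)
    (seq : ℕ → Polynomial (ZMod p)) (hseq0 : seq 0 = Polynomial.X)
    (hseq : ∀ n : ℕ,
      (seq (n + 1)).Monic ∧ Irreducible (seq (n + 1)) ∧
      ¬ seq (n + 1) ∣ (∏ i ∈ Finset.range (n + 1), seq i) ∧
      (∃ h : Polynomial (ZMod p), h ∣ (∏ i ∈ Finset.range (n + 1), seq i) ∧
        seq (n + 1) ∣ h + 1) ∧
      (∀ g : Polynomial (ZMod p), g.Monic → Irreducible g →
        ¬ g ∣ (∏ i ∈ Finset.range (n + 1), seq i) →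
        (∃ h : Polynomial (ZMod p), h ∣ (∏ i ∈ Finset.range (n + 1), seq i) ∧ g ∣ h + 1) →
        Ival p (seq (n + 1)) ≤ Ival p g)) :
    StrictMono (fun n => Ival p (seq n)) ∧
    ∀ g : Polynomial (ZMod p), g.Monic → Irreducible g → ∃ n, seq n = g := by
  classical
  have hp1 : 1 < p := (Fact.out : p.Prime).one_lt
  set P : ℕ → Polynomial (ZMod p) := fun n => ∏ i ∈ Finset.range (n + 1), seq i with hPdef
  have hM : ∀ i, (seq i).Monic := by
    intro i; cases i with
    | zero => rw [hseq0]; exact monic_X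
    | succ i => exact (hseq i).1
  have hIrr : ∀ i, Irreducible (seq i) := by
    intro i; cases i with
    | zero => rw [hseq0]; exact irreducible_X
    | succ i => exact (hseq i).2.1
  have hPmonic : ∀ n, (P n).Monic := fun n => monic_prod_of_monic _ _ fun i _ => hM i
  have hPne : ∀ n, P n ≠ 0 := fun n => (hPmonic n).ne_zero
  have hXdvd : ∀ n, (X : Polynomial (ZMod p)) ∣ P n := by
    intro n
    rw [← hseq0]
    exact Finset.dvd_prod_of_mem _ (Finset.mem_range.2 (Nat.succ_pos n))
  -- existence of a minimal monic irreducible not dividing `P n`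
  have hmin : ∀ n : ℕ, ∃ F : Polynomial (ZMod p), (F.Monic ∧ Irreducible F ∧ ¬ F ∣ P n) ∧
      ∀ g : Polynomial (ZMod p), g.Monic → Irreducible g → ¬ g ∣ P n →
        Ival p F ≤ Ival p g := by
    intro n
    have hne : ∃ g : Polynomial (ZMod p), g.Monic ∧ Irreducible g ∧ ¬ g ∣ P n := by
      have hnu : ¬ IsUnit (P n * X + 1) := by
        apply Polynomial.not_isUnit_of_natDegree_pos
        have h1 : (P n * X + 1).natDegree = (P n * X).natDegree := by
          rw [← C_1]; exact natDegree_add_C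
        rw [h1, natDegree_mul_X (hPne n)]
        omega
      obtain ⟨g, hgm, hgi, hgd⟩ := (P n * X + 1).exists_monic_irreducible_factor hnu
      refine ⟨g, hgm, hgi, fun hdN => ?_⟩
      have hdvd1 : g ∣ 1 := (dvd_add_right (hdN.mul_right X)).mp hgd
      exact hgi.not_isUnit (isUnit_of_dvd_one hdvd1)
    obtain ⟨g0, hg0⟩ := hne
    have hQ : ∃ m, ∃ g : Polynomial (ZMod p),
        (g.Monic ∧ Irreducible g ∧ ¬ g ∣ P n) ∧ Ival p g = m := ⟨Ival p g0, g0, hg0, rfl⟩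
    obtain ⟨F, hF, hFval⟩ := Nat.find_spec hQ
    refine ⟨F, hF, fun g hg1 hg2 hg3 => ?_⟩
    rw [hFval]
    exact Nat.find_le ⟨g, ⟨hg1, hg2, hg3⟩, rfl⟩
  -- the minimal missing monic irreducible is a candidate
  have hcand : ∀ (n : ℕ) (F : Polynomial (ZMod p)), F.Monic → Irreducible F → ¬ F ∣ P n →
      (∀ g : Polynomial (ZMod p), g.Monic → Irreducible g → ¬ g ∣ P n →
        Ival p F ≤ Ival p g) →
      ∃ h : Polynomial (ZMod p), h ∣ P n ∧ F ∣ h + 1 := by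
    intro n F hFm hFi hFd hFmin
    rcases eq_or_lt_of_le (Nat.succ_le_of_lt hFi.natDegree_pos : 1 ≤ F.natDegree) with hd1 | hd2
    · -- degree 1 case
      have hF : F = X + C (F.coeff 0) := hFm.eq_X_add_C hd1.symm
      set c : ZMod p := F.coeff 0 with hc
      have hc0 : c ≠ 0 := by
        intro h0
        apply hFd
        rw [hF, h0, map_zero, add_zero]
        exact hXdvd n
      have hcv : 1 ≤ c.val := by
        have := (ZMod.val_eq_zero c).not.2 hc0
        omega
      have hsub : (c - 1).val = c.val - 1 := by
        have h1 : ((c.val - 1 : ℕ) : ZMod p) = c - 1 := by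
          rw [Nat.cast_sub hcv, Nat.cast_one, ZMod.natCast_rightInverse c]
        rw [← h1, ZMod.val_cast_of_lt]
        have := ZMod.val_lt c
        omega
      have hh : (X + C (c - 1) : Polynomial (ZMod p)).Monic := monic_X_add_C _
      have hhirr : Irreducible (X + C (c - 1) : Polynomial (ZMod p)) := by
        have he : (X + C (c - 1) : Polynomial (ZMod p)) = X - C (-(c - 1)) := by
          rw [map_neg, sub_neg_eq_add]
        rw [he]
        exact irreducible_X_sub_C _
      have hlt : Ival p (X + C (c - 1)) < Ival p F := by
        rw [hF, Ival_X_add_C, Ival_X_add_C, hsub]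
        omega
      have hhd : (X + C (c - 1) : Polynomial (ZMod p)) ∣ P n := by
        by_contra hnd
        exact absurd (hFmin _ hh hhirr hnd) (not_le.2 hlt)
      refine ⟨X + C (c - 1), hhd, ?_⟩
      have he2 : (X + C (c - 1) : Polynomial (ZMod p)) + 1 = F := by
        rw [hF, add_assoc, ← C_1, ← C_add, sub_add_cancel]
      rw [he2]
    · -- degree ≥ 2 case
      obtain ⟨f, hsf, hfd, hfac, hdvd⟩ := hrep F hFi hd2 (-1) (by
        intro hdd
        exact hFi.not_isUnit (isUnit_of_dvd_unit hdd (isUnit_one.neg)))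
      refine ⟨f, ?_, by rwa [sub_neg_eq_add] at hdvd⟩
      apply squarefree_dvd hsf (hPne n)
      intro q hqm hqi hqf
      by_contra hqN
      have h1 : q.natDegree ≤ F.natDegree - 1 := hfac q hqi hqf
      have h2 : q.natDegree < F.natDegree := by omega
      exact absurd (hFmin q hqm hqi hqN) (not_le.2 (Ival_lt_of_deg hFm h2))
  -- main invariant
  have key : ∀ n, ∀ g : Polynomial (ZMod p), g.Monic → Irreducible g →
      (g ∣ P n ↔ Ival p g ≤ Ival p (seq n)) := by
    intro n
    induction n with
    | zero =>
      intro g hgm hgi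
      have hP0 : P 0 = X := by
        rw [hPdef]
        simp [hseq0]
      rw [hP0, hseq0, Ival_X]
      constructor
      · intro hdvd
        have hgx : g = X :=
          eq_of_monic_of_associated hgm monic_X (hgi.associated_of_dvd irreducible_X hdvd)
        rw [hgx, Ival_X]
      · intro hle
        have hd : g.natDegree = 1 := by
          have h1 := le_Ival g hgm
          have h2 := hgi.natDegree_pos
          by_contra hne
          have h3 : 2 ≤ g.natDegree := by omega
          have h4 : p * p ≤ p ^ g.natDegree := by
            calc p * p = p ^ 2 := by ring
              _ ≤ p ^ g.natDegree := Nat.pow_le_pow_right (by omega) h3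
          nlinarith
        have hg : g = X + C (g.coeff 0) := hgm.eq_X_add_C hd
        rw [hg, Ival_X_add_C] at hle
        have hv : (g.coeff 0).val = 0 := by omega
        have hc : g.coeff 0 = 0 := (ZMod.val_eq_zero _).1 hv
        rw [hg, hc, map_zero, add_zero]
    | succ n IH =>
      obtain ⟨F, ⟨hFm, hFi, hFd⟩, hFmin⟩ := hmin n
      obtain ⟨h, hh1, hh2⟩ := hcand n F hFm hFi hFd hFmin
      obtain ⟨hm1, hi1, hd1, -, hmin1⟩ := hseq n
      have hle1 : Ival p (seq (n + 1)) ≤ Ival p F := hmin1 F hFm hFi hFd ⟨h, hh1, hh2⟩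
      have hltn : Ival p (seq n) < Ival p (seq (n + 1)) := by
        by_contra hle
        exact hd1 ((IH _ hm1 hi1).2 (not_lt.1 hle))
      have hPsucc : P (n + 1) = P n * seq (n + 1) := Finset.prod_range_succ _ _
      intro g hgm hgi
      constructor
      · intro hdvd
        rw [hPsucc] at hdvd
        have hgp : Prime g := irreducible_iff_prime.1 hgi
        rcases hgp.2.2 _ _ hdvd with hcase | hcase
        · exact le_trans ((IH g hgm hgi).1 hcase) (le_of_lt hltn)
        · rw [eq_of_monic_of_associated hgm hm1 (hgi.associated_of_dvd hi1 hcase)]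
      · intro hle
        by_cases hdN : g ∣ P n
        · rw [hPsucc]; exact hdN.mul_right _
        · have h1 : Ival p F ≤ Ival p g := hFmin g hgm hgi hdN
          have h2 : Ival p g = Ival p (seq (n + 1)) := le_antisymm hle (le_trans hle1 h1)
          rw [Ival_inj hgm hm1 h2, hPsucc]
          exact dvd_mul_left _ _
  have mono : StrictMono (fun n => Ival p (seq n)) := by
    apply strictMono_nat_of_lt_succ
    intro n
    obtain ⟨hm1, hi1, hd1, -, -⟩ := hseq n
    by_contra hle
    exact hd1 ((key n _ hm1 hi1).2 (not_lt.1 hle))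
  refine ⟨mono, fun g hgm hgi => ?_⟩
  have h1 : Ival p g ≤ Ival p (seq (Ival p g)) := mono.le_apply
  have h2 : g ∣ P (Ival p g) := (key _ g hgm hgi).2 h1
  have hgp : Prime g := irreducible_iff_prime.1 hgi
  obtain ⟨i, hi, hdvd⟩ := hgp.exists_mem_finset_dvd h2
  exact ⟨i, (eq_of_monic_of_associated hgm (hM i) (hgi.associated_of_dvd (hIrr i) hdvd)).symm⟩
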